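/- For every n ≥ 3, 5/4 ≤ e_{(1,0)}ᵀ (I − P'_n)^{-1} e_{(1,0)} < 5, where e_{(1,0)} is the standard basis vector at index (1,0) ∈ (ℤ/nℤ)² ∖ {(0,0)}. -/
import Mathlib

/-- Transition matrix of `1/5`-lazy simple random walk on `(ℤ/nℤ)²`:
`P(x,y) = (1/5)·#{d ∈ {(0,0),(1,0),(−1,0),(0,1),(0,−1)} : y = x + d}`. -/
noncomputable def lazySRW (n : ℕ) : Matrix (ZMod n × ZMod n) (ZMod n × ZMod n) ℝ :=
  fun x y => (1 / 5 : ℝ) *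
    ((({((0 : ZMod n), (0 : ZMod n)), (1, 0), (-1, 0), (0, 1), (0, -1)} :
        Finset (ZMod n × ZMod n)).filter (fun d => y = x + d)).card : ℝ)

/-- The submatrix `P'ₙ` of `lazySRW n` obtained by deleting the row and column of `(0,0)`. -/
noncomputable def lazySRW' (n : ℕ) :
    Matrix {x : ZMod n × ZMod n // x ≠ 0} {x : ZMod n × ZMod n // x ≠ 0} ℝ :=
  fun x y => lazySRW n x.1 y.1

/-- `e_xᵀ (I − P'ₙ)⁻¹ e_y`, the `(x,y)` entry of the resolvent `(I − P'ₙ)⁻¹`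
(with value `0` in the degenerate cases `x = 0` or `y = 0`). -/
noncomputable def resolventEntry (n : ℕ) [NeZero n] (x y : ZMod n × ZMod n) : ℝ :=
  if hx : x ≠ 0 then
    if hy : y ≠ 0 then ((1 - lazySRW' n)⁻¹) ⟨x, hx⟩ ⟨y, hy⟩ else 0
  else 0

namespace ResolventAux

open Finset

variable {n : ℕ}

/-- Averaging operator of the lazy walk, acting on functions on the torus. -/
noncomputable def pv (n : ℕ) (v : ZMod n × ZMod n → ℝ) (y : ZMod n × ZMod n) : ℝ :=
  (1/5 : ℝ) * (v y + v (y + (1,0)) + v (y + (-1,0)) + v (y + (0,1)) + v (y + (0,-1)))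

/-- The quadratic form `v ↦ vᵀ(I - P)v` on the full torus. -/
noncomputable def qf (n : ℕ) [NeZero n] (v : ZMod n × ZMod n → ℝ) : ℝ :=
  ∑ y, v y * (v y - pv n v y)

/-- Local sum of squared differences. -/
noncomputable def ds (n : ℕ) (v : ZMod n × ZMod n → ℝ) (y : ZMod n × ZMod n) : ℝ :=
  (v y - v (y + (1,0)))^2 + (v y - v (y + (-1,0)))^2 +
    (v y - v (y + (0,1)))^2 + (v y - v (y + (0,-1)))^2

lemma one_ne_zero' (hn : 3 ≤ n) : (1 : ZMod n) ≠ 0 := by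
  have : ((1:ℕ) : ZMod n) ≠ 0 := by
    rw [Ne, ZMod.natCast_eq_zero_iff]
    intro h; have := Nat.le_of_dvd one_pos h; omega
  simpa using this

lemma two_ne_zero' (hn : 3 ≤ n) : (2 : ZMod n) ≠ 0 := by
  have : ((2:ℕ) : ZMod n) ≠ 0 := by
    rw [Ne, ZMod.natCast_eq_zero_iff]
    intro h; have := Nat.le_of_dvd (by norm_num) h; omega
  simpa using this

lemma neg_one_ne_zero' (hn : 3 ≤ n) : (-1 : ZMod n) ≠ 0 := by
  simpa [neg_eq_zero] using one_ne_zero' hn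

lemma one_ne_neg_one (hn : 3 ≤ n) : (1 : ZMod n) ≠ -1 := by
  intro h
  have : (2 : ZMod n) = 0 := by
    have := congrArg (· + (1 : ZMod n)) h
    simpa [one_add_one_eq_two] using this
  exact two_ne_zero' hn this

lemma lazySRW_apply (hn : 3 ≤ n) (y z : ZMod n × ZMod n) :
    lazySRW n y z = (1/5 : ℝ) *
      ((if z = y then 1 else 0) + (if z = y + (1,0) then 1 else 0) +
       (if z = y + (-1,0) then 1 else 0) + (if z = y + (0,1) then 1 else 0) +
       (if z = y + (0,-1) then 1 else 0)) := by
  have h1 := one_ne_zero' hn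
  have h2 := neg_one_ne_zero' hn
  have h3 := one_ne_neg_one hn
  have e0 : ((0,0) : ZMod n × ZMod n) ∉ ({(1,0), (-1,0), (0,1), (0,-1)} :
      Finset (ZMod n × ZMod n)) := by
    simp [Prod.ext_iff, h1.symm, h2.symm, eq_comm]
  have e1 : ((1,0) : ZMod n × ZMod n) ∉ ({(-1,0), (0,1), (0,-1)} :
      Finset (ZMod n × ZMod n)) := by
    simp [Prod.ext_iff, h1, h3]
  have e2 : ((-1,0) : ZMod n × ZMod n) ∉ ({(0,1), (0,-1)} :
      Finset (ZMod n × ZMod n)) := by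
    simp [Prod.ext_iff, h2]
  have e3 : ((0,1) : ZMod n × ZMod n) ∉ ({(0,-1)} : Finset (ZMod n × ZMod n)) := by
    simp [Prod.ext_iff, h3]
  rw [lazySRW]
  rw [Finset.card_filter]
  rw [Finset.sum_insert e0, Finset.sum_insert e1, Finset.sum_insert e2, Finset.sum_insert e3,
    Finset.sum_singleton]
  push_cast
  have h00 : y + ((0:ZMod n),(0:ZMod n)) = y := by simp
  rw [h00]; ring

lemma sum_lazySRW_mul (hn : 3 ≤ n) [NeZero n] (v : ZMod n × ZMod n → ℝ) (y : ZMod n × ZMod n) :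
    ∑ z, lazySRW n y z * v z = pv n v y := by
  have hterm : ∀ z, lazySRW n y z * v z =
      (1/5 : ℝ) * ((if z = y then v z else 0) + (if z = y + (1,0) then v z else 0) +
       (if z = y + (-1,0) then v z else 0) + (if z = y + (0,1) then v z else 0) +
       (if z = y + (0,-1) then v z else 0)) := by
    intro z
    rw [lazySRW_apply hn]
    split_ifs <;> ring
  simp only [hterm, ← Finset.mul_sum, Finset.sum_add_distrib, Finset.sum_ite_eq',
    Finset.mem_univ, if_true]
  rfl

lemma sum_shift [NeZero n] (d : ZMod n × ZMod n) (f : ZMod n × ZMod n → ℝ) :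
    ∑ y, f (y + d) = ∑ y, f y :=
  Fintype.sum_equiv (Equiv.addRight d) _ _ (fun _ => rfl)

lemma qf_eq (hn : 3 ≤ n) [NeZero n] (v : ZMod n × ZMod n → ℝ) :
    qf n v = (1/10 : ℝ) * ∑ y, ds n v y := by
  have key : ∀ d : ZMod n × ZMod n,
      ∑ y, v (y + d) * v (y + d) = ∑ y, v y * v y :=
    fun d => sum_shift d (fun y => v y * v y)
  have hq : ∀ y, v y * (v y - pv n v y) =
      (4/5 : ℝ) * (v y * v y) - 1/5 * (v y * v (y + (1,0))) - 1/5 * (v y * v (y + (-1,0)))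
        - 1/5 * (v y * v (y + (0,1))) - 1/5 * (v y * v (y + (0,-1))) := by
    intro y; simp only [pv]; ring
  have hd : ∀ y, ds n v y =
      (4 : ℝ) * (v y * v y)
        + v (y + (1,0)) * v (y + (1,0)) + v (y + (-1,0)) * v (y + (-1,0))
        + v (y + (0,1)) * v (y + (0,1)) + v (y + (0,-1)) * v (y + (0,-1))
        - 2 * (v y * v (y + (1,0))) - 2 * (v y * v (y + (-1,0)))
        - 2 * (v y * v (y + (0,1))) - 2 * (v y * v (y + (0,-1))) := by
    intro y; simp only [ds]; ring
  rw [qf]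
  simp only [hq, hd, Finset.sum_sub_distrib, Finset.sum_add_distrib, ← Finset.mul_sum,
    key]
  ring

lemma qf_nonneg (hn : 3 ≤ n) [NeZero n] (v : ZMod n × ZMod n → ℝ) : 0 ≤ qf n v := by
  rw [qf_eq hn]
  have : ∀ y ∈ Finset.univ, (0:ℝ) ≤ ds n v y := by
    intro y _; rw [ds]; positivity
  have h := Finset.sum_nonneg this
  linarith

lemma sum_pv_symm (hn : 3 ≤ n) [NeZero n] (u v : ZMod n × ZMod n → ℝ) :
    ∑ y, u y * pv n v y = ∑ y, v y * pv n u y := by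
  have cancel : ∀ (c y : ZMod n × ZMod n), y + -c + c = y := fun c y => neg_add_cancel_right y c
  have npair1 : (-((1,0) : ZMod n × ZMod n)) = (-1, 0) := by simp [Prod.ext_iff]
  have npair2 : (-((0,1) : ZMod n × ZMod n)) = (0, -1) := by simp [Prod.ext_iff]
  have npair1' : (-((-1,0) : ZMod n × ZMod n)) = (1, 0) := by simp [Prod.ext_iff]
  have npair2' : (-((0,-1) : ZMod n × ZMod n)) = (0, 1) := by simp [Prod.ext_iff]
  have gen : ∀ d : ZMod n × ZMod n,
      ∑ y, u y * v (y + d) = ∑ y, v y * u (y + -d) := by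
    intro d
    calc ∑ y, u y * v (y + d) = ∑ y, u (y + -d) * v (y + -d + d) :=
          (sum_shift (-d) (fun y => u y * v (y + d))).symm
      _ = ∑ y, v y * u (y + -d) := by
          apply Finset.sum_congr rfl; intro y _; rw [cancel]; ring
  have g1 := gen (1,0); rw [npair1] at g1
  have g2 := gen (-1,0); rw [npair1'] at g2
  have g3 := gen (0,1); rw [npair2] at g3
  have g4 := gen (0,-1); rw [npair2'] at g4
  have huv : ∑ y, u y * v y = ∑ y, v y * u y := by
    apply Finset.sum_congr rfl; intro y _; ring
  have hL : ∀ (a b : ZMod n × ZMod n → ℝ), ∑ y, a y * pv n b y =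
      (1/5 : ℝ) * (∑ y, a y * b y + ∑ y, a y * b (y + (1,0)) + ∑ y, a y * b (y + (-1,0))
        + ∑ y, a y * b (y + (0,1)) + ∑ y, a y * b (y + (0,-1))) := by
    intro a b
    have : ∀ y, a y * pv n b y = (1/5 : ℝ) * (a y * b y + a y * b (y + (1,0))
        + a y * b (y + (-1,0)) + a y * b (y + (0,1)) + a y * b (y + (0,-1))) := by
      intro y; simp only [pv]; ring
    simp only [this, ← Finset.mul_sum, Finset.sum_add_distrib]
  rw [hL, hL]
  rw [g1, g2, g3, g4, huv]
  ring

lemma const_of_shift [NeZero n] (v : ZMod n × ZMod n → ℝ)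
    (h1 : ∀ y, v (y + (1,0)) = v y) (h2 : ∀ y, v (y + (0,1)) = v y) :
    ∀ y, v y = v 0 := by
  have hk : ∀ (d : ZMod n × ZMod n), (∀ y, v (y + d) = v y) →
      ∀ (k : ℕ) (z : ZMod n × ZMod n), v (z + k • d) = v z := by
    intro d hd k
    induction k with
    | zero => intro z; simp
    | succ k ih =>
        intro z
        rw [succ_nsmul, ← add_assoc, hd, ih]
  intro y
  obtain ⟨a, b⟩ := y
  have hrepr : ((a, b) : ZMod n × ZMod n) =
      (0 : ZMod n × ZMod n) + a.val • ((1,0) : ZMod n × ZMod n)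
        + b.val • ((0,1) : ZMod n × ZMod n) := by
    have ha : (a.val : ZMod n) = a := ZMod.natCast_zmod_val a
    have hb : (b.val : ZMod n) = b := ZMod.natCast_zmod_val b
    ext <;> simp [Prod.smul_def, nsmul_eq_mul, ha, hb]
  rw [hrepr, hk _ h2, hk _ h1]

end ResolventAux
namespace ResolventAux

open Finset
variable {n : ℕ} [NeZero n]

/-- Extension of a function on nonzero sites by `0`. -/
noncomputable def ext' (w : {x : ZMod n × ZMod n // x ≠ 0} → ℝ) : ZMod n × ZMod n → ℝ :=
  fun y => if h : y = 0 then 0 else w ⟨y, h⟩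

lemma ext'_zero (w : {x : ZMod n × ZMod n // x ≠ 0} → ℝ) : ext' w 0 = 0 := dif_pos rfl

lemma ext'_ne (w : {x : ZMod n × ZMod n // x ≠ 0} → ℝ) {y : ZMod n × ZMod n} (h : y ≠ 0) :
    ext' w y = w ⟨y, h⟩ := dif_neg h

lemma sum_subtype_ext (f : ZMod n × ZMod n → ℝ) (w : {x : ZMod n × ZMod n // x ≠ 0} → ℝ) :
    ∑ z : {x : ZMod n × ZMod n // x ≠ 0}, f z.1 * w z = ∑ z, f z * ext' w z := by
  rw [Fintype.sum_eq_add_sum_compl 0 (fun z => f z * ext' w z), ext'_zero, mul_zero, zero_add]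
  rw [Finset.sum_subtype (p := fun x : ZMod n × ZMod n => x ≠ 0)
    ({0}ᶜ : Finset (ZMod n × ZMod n)) (by intro x; simp) (fun z => f z * ext' w z)]
  apply Finset.sum_congr rfl
  intro z _
  rw [ext'_ne w z.2]

lemma mulVec_ext (hn : 3 ≤ n) (w : {x : ZMod n × ZMod n // x ≠ 0} → ℝ)
    (s : {x : ZMod n × ZMod n // x ≠ 0}) :
    (1 - lazySRW' n).mulVec w s = ext' w s.1 - pv n (ext' w) s.1 := by
  have h1 : (1 - lazySRW' n).mulVec w s =
      ∑ z : {x : ZMod n × ZMod n // x ≠ 0},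
        ((if s = z then (1:ℝ) else 0) - lazySRW n s.1 z.1) * w z := by
    simp [Matrix.mulVec, dotProduct, Matrix.sub_apply, Matrix.one_apply, lazySRW']
  rw [h1]
  have h2 : ∑ z : {x : ZMod n × ZMod n // x ≠ 0},
        ((if s = z then (1:ℝ) else 0) - lazySRW n s.1 z.1) * w z
      = (∑ z : {x : ZMod n × ZMod n // x ≠ 0}, (if s = z then w z else 0))
        - ∑ z : {x : ZMod n × ZMod n // x ≠ 0}, lazySRW n s.1 z.1 * w z := by
    rw [← Finset.sum_sub_distrib]
    apply Finset.sum_congr rfl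
    intro z _; split_ifs <;> ring
  rw [h2, Finset.sum_ite_eq Finset.univ s w, if_pos (Finset.mem_univ s)]
  rw [sum_subtype_ext (lazySRW n s.1) w, sum_lazySRW_mul hn (ext' w) s.1]
  rw [ext'_ne w s.2]

lemma isUnit_one_sub (hn : 3 ≤ n) : IsUnit (1 - lazySRW' n) := by
  rw [← Matrix.mulVec_injective_iff_isUnit]
  intro u v huv
  have h0 : (1 - lazySRW' n).mulVec (u - v) = 0 := by
    rw [Matrix.mulVec_sub, huv, sub_self]
  set w := u - v with hw
  suffices hz : w = 0 by exact sub_eq_zero.mp hz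
  have hW0 : ∀ y : ZMod n × ZMod n, y ≠ 0 → ext' w y - pv n (ext' w) y = 0 := by
    intro y hy
    have := congrFun h0 ⟨y, hy⟩
    rw [mulVec_ext hn] at this
    simpa using this
  have hq0 : qf n (ext' w) = 0 := by
    rw [qf]
    apply Finset.sum_eq_zero
    intro y _
    by_cases hy : y = 0
    · subst hy; rw [ext'_zero]; ring
    · rw [hW0 y hy, mul_zero]
  have hds0 : ∀ y : ZMod n × ZMod n, ds n (ext' w) y = 0 := by
    have h := qf_eq hn (ext' w)
    rw [hq0] at h
    have hsum : ∑ y, ds n (ext' w) y = 0 := by linarith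
    intro y
    exact (Finset.sum_eq_zero_iff_of_nonneg (by
      intro i _; rw [ds]; positivity)).mp hsum y (Finset.mem_univ y)
  have h1s : ∀ y, ext' w (y + ((1:ZMod n), (0:ZMod n))) = ext' w y := by
    intro y
    have h := hds0 y
    rw [ds] at h
    have n2 := sq_nonneg (ext' w y - ext' w (y + (-1,0)))
    have n3 := sq_nonneg (ext' w y - ext' w (y + (0,1)))
    have n4 := sq_nonneg (ext' w y - ext' w (y + (0,-1)))
    have n1 := sq_nonneg (ext' w y - ext' w (y + (1,0)))
    have e1 : (ext' w y - ext' w (y + (1,0)))^2 = 0 := by linarith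
    have := (pow_eq_zero_iff two_ne_zero).mp e1
    linarith
  have h2s : ∀ y, ext' w (y + ((0:ZMod n), (1:ZMod n))) = ext' w y := by
    intro y
    have h := hds0 y
    rw [ds] at h
    have n2 := sq_nonneg (ext' w y - ext' w (y + (-1,0)))
    have n3 := sq_nonneg (ext' w y - ext' w (y + (1,0)))
    have n4 := sq_nonneg (ext' w y - ext' w (y + (0,-1)))
    have e1 : (ext' w y - ext' w (y + (0,1)))^2 = 0 := by linarith [sq_nonneg (ext' w y - ext' w (y + (0,1)))]
    have := (pow_eq_zero_iff two_ne_zero).mp e1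
    linarith
  have hconst := const_of_shift (ext' w) h1s h2s
  funext s
  have hws : w s = ext' w s.1 := (ext'_ne w s.2).symm
  have h2 := hconst s.1
  rw [ext'_zero] at h2
  simp [hws, h2]

end ResolventAux
namespace ResolventAux

open Finset
variable {n : ℕ} [NeZero n]

lemma qf_eq_of_key (hn : 3 ≤ n) (G : ZMod n × ZMod n → ℝ) (hG0 : G 0 = 0)
    (hkey : ∀ y : ZMod n × ZMod n, y ≠ 0 →
      G y - pv n G y = (if y = ((1:ZMod n),(0:ZMod n)) then 1 else 0)) :
    qf n G = G ((1:ZMod n),(0:ZMod n)) := by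
  have hx0 : ((1:ZMod n),(0:ZMod n)) ≠ (0 : ZMod n × ZMod n) := by
    simp [Prod.ext_iff, one_ne_zero' hn]
  rw [qf]
  have hterm : ∀ y, G y * (G y - pv n G y)
      = if y = ((1:ZMod n),(0:ZMod n)) then G ((1:ZMod n),(0:ZMod n)) else 0 := by
    intro y
    by_cases hy : y = 0
    · rw [if_neg (by rw [hy]; exact fun h => hx0 h.symm), hy, hG0, zero_mul]
    · rw [hkey y hy]
      by_cases hxy : y = ((1:ZMod n),(0:ZMod n))
      · rw [if_pos hxy, if_pos hxy, hxy, mul_one]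
      · rw [if_neg hxy, if_neg hxy, mul_zero]
  rw [Finset.sum_congr rfl fun y _ => hterm y,
    Finset.sum_ite_eq' Finset.univ _ (fun _ => G ((1:ZMod n),(0:ZMod n)))]
  simp

lemma lower (hn : 3 ≤ n) (G : ZMod n × ZMod n → ℝ) (hG0 : G 0 = 0)
    (hkey : ∀ y : ZMod n × ZMod n, y ≠ 0 →
      G y - pv n G y = (if y = ((1:ZMod n),(0:ZMod n)) then 1 else 0)) :
    5/4 ≤ G ((1:ZMod n),(0:ZMod n)) := by
  have h1 := one_ne_zero' hn
  have hneg1 := neg_one_ne_zero' hn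
  have hx0 : ((1:ZMod n),(0:ZMod n)) ≠ (0 : ZMod n × ZMod n) := by simp [Prod.ext_iff, h1]
  have hQG : qf n G = G ((1:ZMod n),(0:ZMod n)) := qf_eq_of_key hn G hG0 hkey
  set w : ZMod n × ZMod n → ℝ := fun y => if y = ((1:ZMod n),(0:ZMod n)) then 1 else 0 with hw
  have hwx : w ((1:ZMod n),(0:ZMod n)) = 1 := by rw [hw]; simp
  have hwo : ∀ y, y ≠ ((1:ZMod n),(0:ZMod n)) → w y = 0 := by
    intro y hy; rw [hw]; simp [hy]
  have h21' : (2:ZMod n) ≠ 1 := by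
    intro h
    apply h1
    rw [← one_add_one_eq_two] at h
    have h' : (1:ZMod n) + 1 = 0 + 1 := h.trans (zero_add 1).symm
    exact add_right_cancel h'
  have h21 : ((2:ZMod n),(0:ZMod n)) ≠ ((1:ZMod n),(0:ZMod n)) := by
    simp [Prod.ext_iff, h21']
  have h0x : (0 : ZMod n × ZMod n) ≠ ((1:ZMod n),(0:ZMod n)) := fun h => hx0 h.symm
  have h11 : ((1:ZMod n),(1:ZMod n)) ≠ ((1:ZMod n),(0:ZMod n)) := by
    simp [Prod.ext_iff, h1]
  have h1m : ((1:ZMod n),(-1:ZMod n)) ≠ ((1:ZMod n),(0:ZMod n)) := by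
    simp [Prod.ext_iff, hneg1]
  have haA : ((1:ZMod n),(0:ZMod n)) + (1,0) = ((2:ZMod n),(0:ZMod n)) := by
    rw [Prod.mk_add_mk]; norm_num
  have haB : ((1:ZMod n),(0:ZMod n)) + (-1,0) = (0 : ZMod n × ZMod n) := by
    rw [Prod.mk_add_mk]; simp
  have haC : ((1:ZMod n),(0:ZMod n)) + (0,1) = ((1:ZMod n),(1:ZMod n)) := by
    rw [Prod.mk_add_mk]; norm_num
  have haD : ((1:ZMod n),(0:ZMod n)) + (0,-1) = ((1:ZMod n),(-1:ZMod n)) := by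
    rw [Prod.mk_add_mk]; norm_num
  have hpvw : pv n w ((1:ZMod n),(0:ZMod n)) = 1/5 := by
    rw [pv, haA, haB, haC, haD, hwx, hwo _ h21, hwo _ h0x, hwo _ h11, hwo _ h1m]
    norm_num
  have hQw : qf n w = 4/5 := by
    rw [qf]
    have hterm : ∀ y, w y * (w y - pv n w y)
        = if y = ((1:ZMod n),(0:ZMod n)) then (1 - 1/5 : ℝ) else 0 := by
      intro y
      by_cases hxy : y = ((1:ZMod n),(0:ZMod n))
      · rw [if_pos hxy, hxy, hwx, hpvw, one_mul]
      · rw [if_neg hxy, hwo y hxy, zero_mul]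
    rw [Finset.sum_congr rfl fun y _ => hterm y,
      Finset.sum_ite_eq' Finset.univ _ (fun _ => (1 - 1/5 : ℝ))]
    norm_num
  have hB2 : ∑ y, w y * (G y - pv n G y) = 1 := by
    have hterm : ∀ y, w y * (G y - pv n G y)
        = if y = ((1:ZMod n),(0:ZMod n)) then (1:ℝ) else 0 := by
      intro y
      by_cases hxy : y = ((1:ZMod n),(0:ZMod n))
      · rw [if_pos hxy, hxy, hwx, one_mul, hkey _ hx0, if_pos rfl]
      · rw [if_neg hxy, hwo y hxy, zero_mul]
    rw [Finset.sum_congr rfl fun y _ => hterm y,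
      Finset.sum_ite_eq' Finset.univ _ (fun _ => (1:ℝ))]
    simp
  have hB1 : ∑ y, G y * (w y - pv n w y) = 1 := by
    have e1 : ∑ y, G y * (w y - pv n w y)
        = ∑ y, G y * w y - ∑ y, G y * pv n w y := by
      rw [← Finset.sum_sub_distrib]; apply Finset.sum_congr rfl; intro y _; ring
    have e2 : ∑ y, w y * (G y - pv n G y)
        = ∑ y, w y * G y - ∑ y, w y * pv n G y := by
      rw [← Finset.sum_sub_distrib]; apply Finset.sum_congr rfl; intro y _; ring
    have e3 : ∑ y, G y * w y = ∑ y, w y * G y := by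
      apply Finset.sum_congr rfl; intro y _; ring
    have e4 := sum_pv_symm hn G w
    rw [e1, e3, e4]
    rw [e2] at hB2
    linarith
  have hquad : ∀ t : ℝ, 0 ≤ 4/5 * (t*t) + 2*t + G ((1:ZMod n),(0:ZMod n)) := by
    intro t
    have hnn := qf_nonneg hn (fun y => G y + t * w y)
    have hexp : qf n (fun y => G y + t * w y)
        = qf n G + t * (∑ y, G y * (w y - pv n w y)) + t * (∑ y, w y * (G y - pv n G y))
          + (t*t) * qf n w := by
      rw [qf, qf, qf]
      have hp : ∀ y, (G y + t * w y) * ((G y + t * w y) - pv n (fun z => G z + t * w z) y)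
          = G y * (G y - pv n G y) + t * (G y * (w y - pv n w y))
            + t * (w y * (G y - pv n G y)) + (t*t) * (w y * (w y - pv n w y)) := by
        intro y; simp only [pv]; ring
      rw [Finset.sum_congr rfl fun y _ => hp y]
      rw [Finset.sum_add_distrib, Finset.sum_add_distrib, Finset.sum_add_distrib,
        ← Finset.mul_sum, ← Finset.mul_sum, ← Finset.mul_sum]
    rw [hexp, hQG, hQw, hB1, hB2] at hnn
    linarith
  have hd := discrim_le_zero hquad
  rw [discrim] at hd
  nlinarith [hd]

set_option maxHeartbeats 1000000 in
lemma upper (hn : 3 ≤ n) (G : ZMod n × ZMod n → ℝ) (hG0 : G 0 = 0)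
    (hkey : ∀ y : ZMod n × ZMod n, y ≠ 0 →
      G y - pv n G y = (if y = ((1:ZMod n),(0:ZMod n)) then 1 else 0)) :
    G ((1:ZMod n),(0:ZMod n)) < 5 := by
  have h1 := one_ne_zero' hn
  have hlow := lower hn G hG0 hkey
  have hQG : qf n G = G ((1:ZMod n),(0:ZMod n)) := qf_eq_of_key hn G hG0 hkey
  have hsum : ∑ y, ds n G y = 10 * G ((1:ZMod n),(0:ZMod n)) := by
    have h := qf_eq hn G
    rw [hQG] at h
    linarith
  set γ := G ((1:ZMod n),(0:ZMod n)) with hγ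
  set a := G ((0:ZMod n),(1:ZMod n)) with ha
  set b := G ((1:ZMod n),(1:ZMod n)) with hb
  -- distinctness of the four selected sites
  have hd01 : (0 : ZMod n × ZMod n) ≠ ((1:ZMod n),(0:ZMod n)) := by
    simp [Prod.ext_iff, h1.symm]
  have hd02 : (0 : ZMod n × ZMod n) ≠ ((0:ZMod n),(1:ZMod n)) := by
    simp [Prod.ext_iff, h1.symm]
  have hd03 : (0 : ZMod n × ZMod n) ≠ ((1:ZMod n),(1:ZMod n)) := by
    simp [Prod.ext_iff, h1.symm]
  have hd12 : ((1:ZMod n),(0:ZMod n)) ≠ ((0:ZMod n),(1:ZMod n)) := by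
    simp [Prod.ext_iff, h1]
  have hd13 : ((1:ZMod n),(0:ZMod n)) ≠ ((1:ZMod n),(1:ZMod n)) := by
    simp [Prod.ext_iff, h1.symm]
  have hd23 : ((0:ZMod n),(1:ZMod n)) ≠ ((1:ZMod n),(1:ZMod n)) := by
    simp [Prod.ext_iff, h1.symm]
  have hsub : ds n G 0 + ds n G ((1:ZMod n),(0:ZMod n)) + ds n G ((0:ZMod n),(1:ZMod n))
      + ds n G ((1:ZMod n),(1:ZMod n)) ≤ ∑ y, ds n G y := by
    have e : ∑ y ∈ ({(0 : ZMod n × ZMod n), ((1:ZMod n),(0:ZMod n)), ((0:ZMod n),(1:ZMod n)),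
        ((1:ZMod n),(1:ZMod n))} : Finset (ZMod n × ZMod n)), ds n G y
        = ds n G 0 + ds n G ((1:ZMod n),(0:ZMod n)) + ds n G ((0:ZMod n),(1:ZMod n))
          + ds n G ((1:ZMod n),(1:ZMod n)) := by
      rw [Finset.sum_insert (by simp [Prod.ext_iff, h1, h1.symm]),
        Finset.sum_insert (by simp [Prod.ext_iff, h1, h1.symm]),
        Finset.sum_insert (by simp [Prod.ext_iff, h1, h1.symm]), Finset.sum_singleton]
      ring
    rw [← e]
    apply Finset.sum_le_sum_of_subset_of_nonneg (Finset.subset_univ _)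
    intro i _ _; rw [ds]; positivity
  -- addresses
  have haA : ((1:ZMod n),(0:ZMod n)) + (1,0) = ((2:ZMod n),(0:ZMod n)) := by
    rw [Prod.mk_add_mk]; norm_num
  have haB : ((1:ZMod n),(0:ZMod n)) + (-1,0) = (0 : ZMod n × ZMod n) := by
    rw [Prod.mk_add_mk]; simp
  have haC : ((1:ZMod n),(0:ZMod n)) + (0,1) = ((1:ZMod n),(1:ZMod n)) := by
    rw [Prod.mk_add_mk]; norm_num
  have haD : ((1:ZMod n),(0:ZMod n)) + (0,-1) = ((1:ZMod n),(-1:ZMod n)) := by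
    rw [Prod.mk_add_mk]; norm_num
  have hbA : ((0:ZMod n),(1:ZMod n)) + (1,0) = ((1:ZMod n),(1:ZMod n)) := by
    rw [Prod.mk_add_mk]; norm_num
  have hbB : ((0:ZMod n),(1:ZMod n)) + (0,-1) = (0 : ZMod n × ZMod n) := by
    rw [Prod.mk_add_mk]; simp
  have hcA : ((1:ZMod n),(1:ZMod n)) + (-1,0) = ((0:ZMod n),(1:ZMod n)) := by
    rw [Prod.mk_add_mk]; norm_num
  have hcB : ((1:ZMod n),(1:ZMod n)) + (0,-1) = ((1:ZMod n),(0:ZMod n)) := by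
    rw [Prod.mk_add_mk]; norm_num
  have hz : ∀ d : ZMod n × ZMod n, (0 : ZMod n × ZMod n) + d = d := fun d => zero_add d
  have hD0 : γ^2 + a^2 ≤ ds n G 0 := by
    rw [ds, hz, hz, hz, hz, hG0]
    nlinarith [sq_nonneg (G ((-1:ZMod n),(0:ZMod n))), sq_nonneg (G ((0:ZMod n),(-1:ZMod n)))]
  have hD1 : γ^2 + (γ - b)^2 ≤ ds n G ((1:ZMod n),(0:ZMod n)) := by
    rw [ds, haA, haB, haC, haD, hG0]
    nlinarith [sq_nonneg (γ - G ((2:ZMod n),(0:ZMod n))), sq_nonneg (γ - G ((1:ZMod n),(-1:ZMod n)))]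
  have hD2 : a^2 + (a - b)^2 ≤ ds n G ((0:ZMod n),(1:ZMod n)) := by
    rw [ds, hbA, hbB, hG0]
    nlinarith [sq_nonneg (a - G (((0:ZMod n),(1:ZMod n)) + (-1,0))),
      sq_nonneg (a - G (((0:ZMod n),(1:ZMod n)) + (0,1)))]
  have hD3 : (b - a)^2 + (b - γ)^2 ≤ ds n G ((1:ZMod n),(1:ZMod n)) := by
    rw [ds, hcA, hcB]
    nlinarith [sq_nonneg (b - G (((1:ZMod n),(1:ZMod n)) + (1,0))),
      sq_nonneg (b - G (((1:ZMod n),(1:ZMod n)) + (0,1)))]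
  have hmain : γ^2 + a^2 + (γ - b)^2 + (b - a)^2 ≤ 5 * γ := by nlinarith [hsub, hsum, hD0, hD1, hD2, hD3]
  have hsq : 16 * γ^2 ≤ 60 * γ := by
    nlinarith [hmain, sq_nonneg (3*(γ - b) - γ), sq_nonneg (3*(b - a) - γ), sq_nonneg (3*a - γ),
      sq_nonneg ((γ - b) - (b - a)), sq_nonneg ((γ - b) - a), sq_nonneg ((b - a) - a)]
  nlinarith [hsq, hlow]

end ResolventAux

theorem resolvent_diagonal_entry_bounds (n : ℕ) [NeZero n] (hn : 3 ≤ n) :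
    5 / 4 ≤ resolventEntry n (1, 0) (1, 0) ∧ resolventEntry n (1, 0) (1, 0) < 5 := by
  classical
  open ResolventAux in
  have h1 : (1:ZMod n) ≠ 0 := ResolventAux.one_ne_zero' hn
  have hx0 : ((1:ZMod n),(0:ZMod n)) ≠ (0 : ZMod n × ZMod n) := by simp [Prod.ext_iff, h1]
  have hA : IsUnit (1 - lazySRW' n) := ResolventAux.isUnit_one_sub hn
  have hAdet : IsUnit (1 - lazySRW' n).det := (Matrix.isUnit_iff_isUnit_det _).mp hA
  set x' : {x : ZMod n × ZMod n // x ≠ 0} := ⟨((1:ZMod n),(0:ZMod n)), hx0⟩ with hx'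
  set g : {x : ZMod n × ZMod n // x ≠ 0} → ℝ := fun s => (1 - lazySRW' n)⁻¹ s x' with hg
  have hres : resolventEntry n (1, 0) (1, 0) = ResolventAux.ext' g ((1:ZMod n),(0:ZMod n)) := by
    rw [resolventEntry, dif_pos hx0, dif_pos hx0, ResolventAux.ext'_ne g hx0]
  have hmul : ∀ s, (1 - lazySRW' n).mulVec g s = if s = x' then 1 else 0 := by
    intro s
    have e : (1 - lazySRW' n).mulVec g s = ((1 - lazySRW' n) * (1 - lazySRW' n)⁻¹) s x' := by
      simp only [hg, Matrix.mul_apply, Matrix.mulVec, dotProduct]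
    rw [e, Matrix.mul_nonsing_inv _ hAdet, Matrix.one_apply]
  have hkey : ∀ y : ZMod n × ZMod n, y ≠ 0 →
      ResolventAux.ext' g y - ResolventAux.pv n (ResolventAux.ext' g) y
        = (if y = ((1:ZMod n),(0:ZMod n)) then 1 else 0) := by
    intro y hy
    have h := hmul ⟨y, hy⟩
    rw [ResolventAux.mulVec_ext hn] at h
    rw [h, hx']
    simp only [Subtype.mk.injEq]
  have hG0 : ResolventAux.ext' g 0 = 0 := ResolventAux.ext'_zero g
  constructor
  · rw [hres]; exact ResolventAux.lower hn _ hG0 hkey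
  · rw [hres]; exact ResolventAux.upper hn _ hG0 hkey
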